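/- Let D be a cone of directions in a finite-dimensional vector space V containing a basis (e_j) of V such that eᵢ ± e_j ∈ D for all i < j. Then every D-affine function f : V → ℝ (i.e., both f and −f are D-convex) is affine. -/

import Mathlib

open Set

/-- D-convexity on all of `V`: convexity along every line with direction in `D`. -/
def DConvex {V : Type*} [AddCommGroup V] [Module ℝ V] (D : Set V) (f : V → ℝ) : Prop :=
  ∀ (x : V), ∀ e ∈ D, ConvexOn ℝ Set.univ (fun t : ℝ => f (x + t • e))

/-- if the cone of directions `D` contains a basis `(eⱼ)` with
`eᵢ ± eⱼ ∈ D` for `i < j`, then every D-affine function is affine. -/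
theorem daffine_is_affine
    {V : Type*} [NormedAddCommGroup V] [NormedSpace ℝ V] [FiniteDimensional ℝ V]
    (D : Set V) (hDbal : ∀ (t : ℝ), ∀ x ∈ D, t • x ∈ D)
    {ι : Type*} [Fintype ι] (b : Module.Basis ι ℝ V)
    (hbD : ∀ i, b i ∈ D)
    (hsum : ∀ i j, i ≠ j → b i + b j ∈ D)
    (hdiff : ∀ i j, i ≠ j → b i - b j ∈ D)
    (f : V → ℝ) (hf : DConvex D f) (hf' : DConvex D (fun x => -f x)) :
    ∃ (ℓ : V →ₗ[ℝ] ℝ) (c : ℝ), ∀ x, f x = ℓ x + c := by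
  classical
  -- equality along D-lines (convexity + concavity)
  have key : ∀ (x : V), ∀ e ∈ D, ∀ p q t : ℝ, 0 ≤ t → t ≤ 1 →
      f (x + ((1-t)*p + t*q) • e) = (1-t) * f (x + p • e) + t * f (x + q • e) := by
    intro x e he p q t ht0 ht1
    have h1 := (hf x e he).2 (mem_univ p) (mem_univ q) (by linarith : (0:ℝ) ≤ 1 - t)
      ht0 (by ring)
    have h2 := (hf' x e he).2 (mem_univ p) (mem_univ q) (by linarith : (0:ℝ) ≤ 1 - t)
      ht0 (by ring)
    simp only [smul_eq_mul] at h1 h2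
    linarith
  -- f is affine along every direction in D
  have aff : ∀ (x : V), ∀ e ∈ D, ∀ t : ℝ,
      f (x + t • e) = f x + t * (f (x + e) - f x) := by
    intro x e he t
    rcases le_or_gt t 0 with ht | ht
    · rcases lt_or_eq_of_le ht with ht | rfl
      · -- t < 0
        have h1t : (0:ℝ) < 1 - t := by linarith
        have h := key x e he t 1 (-t/(1-t)) (div_nonneg (by linarith) (by linarith))
          (by rw [div_le_one h1t]; linarith)
        have harg : (1 - -t/(1-t))*t + (-t/(1-t))*1 = 0 := by field_simp; ring
        rw [harg, zero_smul, add_zero, one_smul] at h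
        have hco : 1 - -t/(1-t) = 1/(1-t) := by field_simp; ring
        rw [hco] at h
        have h1t' : (1:ℝ) - t ≠ 0 := ne_of_gt h1t
        field_simp at h
        linarith
      · simp
    · rcases le_or_gt t 1 with ht1 | ht1
      · have h := key x e he 0 1 t ht.le ht1
        have harg : (1-t)*0 + t*1 = t := by ring
        rw [harg, zero_smul, add_zero, one_smul] at h
        rw [h]; ring
      · -- t > 1
        have htne : t ≠ 0 := by linarith
        have h := key x e he 0 t (1/t) (by positivity) (by rw [div_le_one (by linarith)]; linarith)
        have harg : (1-1/t)*0 + (1/t)*t = 1 := by field_simp; ring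
        rw [harg, zero_smul, add_zero, one_smul] at h
        field_simp at h
        nlinarith [h]
  -- parallelogram identity
  have par : ∀ (x : V) (i j : ι), i ≠ j →
      f (x + b i) + f (x + b j) = f x + f (x + b i + b j) := by
    intro x i j hij
    have h1 := key x (b i + b j) (hsum i j hij) 0 1 (1/2) (by norm_num) (by norm_num)
    have h2 := key (x + b j) (b i - b j) (hdiff i j hij) 0 1 (1/2) (by norm_num) (by norm_num)
    have harg : ((1:ℝ)-1/2)*0 + (1/2)*1 = 1/2 := by norm_num
    rw [harg, zero_smul, add_zero, one_smul] at h1 h2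
    have hv1 : x + b j + ((1:ℝ)/2) • (b i - b j) = x + ((1:ℝ)/2) • (b i + b j) := by
      module
    have hv2 : x + b j + (b i - b j) = x + b i := by module
    have hv3 : x + (b i + b j) = x + b i + b j := by module
    rw [hv1, hv2] at h2
    rw [hv3] at h1
    linarith
  -- slope along b i is independent of basepoint: one-step shift
  have cshift : ∀ (x : V) (i j : ι) (s : ℝ),
      f (x + s • b j + b i) - f (x + s • b j) = f (x + b i) - f x := by
    intro x i j s
    rcases eq_or_ne j i with rfl | hji
    · have h1 := aff x (b j) (hbD j) s
      have h2 := aff x (b j) (hbD j) (s+1)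
      have hv : x + s • b j + b j = x + (s+1) • b j := by module
      rw [hv, h2, h1]; ring
    · have h1 := aff x (b j) (hbD j) s
      have h2 := aff (x + b i) (b j) (hbD j) s
      have hp := par x i j (Ne.symm hji)
      have hv : x + s • b j + b i = x + b i + s • b j := by module
      rw [hv, h2, h1]
      linear_combination (-s) * hp
  -- slope independent of basepoint, globally
  have cconst : ∀ (x : V) (i : ι), f (x + b i) - f x = f (b i) - f 0 := by
    have claim : ∀ (s : Finset ι) (g : ι → ℝ) (y : V) (i : ι),
        f (y + (∑ j ∈ s, g j • b j) + b i) - f (y + ∑ j ∈ s, g j • b j)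
          = f (y + b i) - f y := by
      intro s
      induction s using Finset.induction with
      | empty => intro g y i; simp
      | insert a s' ha ih =>
        intro g y i
        rw [Finset.sum_insert ha]
        have hv : y + (g a • b a + ∑ j ∈ s', g j • b j)
            = (y + ∑ j ∈ s', g j • b j) + g a • b a := by abel
        rw [hv]
        rw [cshift (y + ∑ j ∈ s', g j • b j) i a (g a)]
        exact ih g y i
    intro x i
    have hx : (0:V) + (∑ j : ι, b.repr x j • b j) = x := by
      rw [zero_add, Module.Basis.sum_repr]
    have := claim Finset.univ (fun j => b.repr x j) 0 i
    rw [hx] at this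
    simpa using this
  -- global formula
  have main : ∀ (s : Finset ι) (g : ι → ℝ) (y : V),
      f (y + ∑ j ∈ s, g j • b j) = f y + ∑ j ∈ s, g j * (f (b j) - f 0) := by
    intro s
    induction s using Finset.induction with
    | empty => intro g y; simp
    | insert a s' ha ih =>
      intro g y
      rw [Finset.sum_insert ha, Finset.sum_insert ha]
      have hv : y + (g a • b a + ∑ j ∈ s', g j • b j)
          = (y + ∑ j ∈ s', g j • b j) + g a • b a := by abel
      rw [hv, aff (y + ∑ j ∈ s', g j • b j) (b a) (hbD a) (g a),
        cconst (y + ∑ j ∈ s', g j • b j) a, ih g y]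
      ring
  refine ⟨b.constr ℝ (fun j => f (b j) - f 0), f 0, fun x => ?_⟩
  have hx : (0:V) + (∑ j : ι, b.repr x j • b j) = x := by
    rw [zero_add, Module.Basis.sum_repr]
  have h := main Finset.univ (fun j => b.repr x j) 0
  rw [hx] at h
  rw [h, Module.Basis.constr_apply_fintype]
  simp [Module.Basis.equivFun_apply, smul_eq_mul]
  ring
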